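/- Let q ≥ 10 be an integer and 0 < ε ≤ 1/10. Let Z be a symmetric positive definite n×n real matrix and w ∈ R^n with w^T Z^{-1} w ≤ ε/q. Then Z - w w^T is positive definite and tr((Z - w w^T)^{-q}) ≤ tr(Z^{-q}) + q(1+ε) · w^T Z^{-(q+1)} w. -/

import Mathlib

open Matrix

section helpers2
variable {n : ℕ}

lemma sym_dot (M : Matrix (Fin n) (Fin n) ℝ) (hM : Mᵀ = M) (a b : Fin n → ℝ) :
    (M *ᵥ a) ⬝ᵥ b = a ⬝ᵥ (M *ᵥ b) := by
  rw [← hM, mulVec_transpose, ← dotProduct_mulVec, hM]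

lemma psd_cauchy_schwarz (M : Matrix (Fin n) (Fin n) ℝ) (hM : M.PosSemidef)
    (u v : Fin n → ℝ) : (u ⬝ᵥ M *ᵥ v) ^ 2 ≤ (u ⬝ᵥ M *ᵥ u) * (v ⬝ᵥ M *ᵥ v) := by
  have hsym : Mᵀ = M := by
    have := hM.1
    rwa [IsHermitian, conjTranspose_eq_transpose_of_trivial] at this
  have hvu : v ⬝ᵥ M *ᵥ u = u ⬝ᵥ M *ᵥ v := by
    rw [← sym_dot M hsym v u, dotProduct_comm]
  have hquad : ∀ x : ℝ, 0 ≤ (v ⬝ᵥ M *ᵥ v) * (x * x) + (2 * (u ⬝ᵥ M *ᵥ v)) * x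
      + (u ⬝ᵥ M *ᵥ u) := by
    intro x
    have h0 := hM.dotProduct_mulVec_nonneg (u + x • v)
    have hexp : star (u + x • v) ⬝ᵥ M *ᵥ (u + x • v)
        = (v ⬝ᵥ M *ᵥ v) * (x * x) + (2 * (u ⬝ᵥ M *ᵥ v)) * x + (u ⬝ᵥ M *ᵥ u) := by
      simp only [star_trivial, mulVec_add, mulVec_smul, dotProduct_add, add_dotProduct,
        dotProduct_smul, smul_dotProduct, smul_eq_mul, hvu]
      ring
    rw [hexp] at h0
    exact h0
  have hd := discrim_le_zero hquad
  rw [discrim] at hd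
  nlinarith [hd]

lemma posDef_pow {M : Matrix (Fin n) (Fin n) ℝ} (hM : M.PosDef) : ∀ k, (M ^ k).PosDef
  | 0 => by simpa using (Matrix.PosDef.one : (1 : Matrix (Fin n) (Fin n) ℝ).PosDef)
  | 1 => by simpa using hM
  | (k + 2) => by
    have ih := posDef_pow hM k
    have hsym : Mᵀ = M := by
      have := hM.1; rwa [IsHermitian, conjTranspose_eq_transpose_of_trivial] at this
    refine PosDef.of_dotProduct_mulVec_pos (hM.1.pow _) (fun x hx => ?_)
    have hMx : M *ᵥ x ≠ 0 := by
      intro h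
      have := hM.dotProduct_mulVec_pos hx
      rw [h] at this
      simp at this
    have h2 := ih.dotProduct_mulVec_pos hMx
    have hrw : x ⬝ᵥ (M ^ (k + 2)) *ᵥ x = (M *ᵥ x) ⬝ᵥ (M ^ k) *ᵥ (M *ᵥ x) := by
      have h : M ^ (k + 2) = M * (M ^ k * M) := by
        rw [pow_succ, pow_succ', mul_assoc]
      rw [h, ← mulVec_mulVec, ← mulVec_mulVec, ← sym_dot M hsym]
    simpa [star_trivial, hrw] using h2

lemma seq_merge (t : ℕ → ℝ) (hpos : ∀ m, 0 < t m)
    (hlc : ∀ m, t (m + 1) ^ 2 ≤ t m * t (m + 2)) :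
    ∀ a b, t (a + 1) * t (b + 1) ≤ t 1 * t (a + b + 1) := by
  have C : ∀ k a, t (a + 2) * t (a + k + 1) ≤ t (a + 1) * t (a + k + 2) := by
    intro k
    induction k with
    | zero => intro a; rw [mul_comm]
    | succ k ih =>
      intro a
      have h1 := ih a
      have h2 := hlc (a + k + 1)
      have e1 : a + k + 1 + 1 = a + k + 2 := by omega
      have e2 : a + k + 1 + 2 = a + k + 3 := by omega
      have e3 : a + (k + 1) + 1 = a + k + 2 := by omega
      have e4 : a + (k + 1) + 2 = a + k + 3 := by omega
      rw [e1, e2] at h2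
      rw [e3, e4]
      have p1 := hpos (a + k + 1)
      have p2 := hpos (a + k + 2)
      have p3 := hpos (a + 2)
      have p4 := hpos (a + 1)
      have p5 := hpos (a + k + 3)
      nlinarith [mul_pos p3 p2]
  intro a
  induction a with
  | zero => intro b; simp
  | succ a ih =>
    intro b
    have h1 := ih b
    have h2 := C b a
    have e1 : a + b + 1 + 1 = a + b + 2 := by omega
    have e2 : a + 1 + 1 = a + 2 := by omega
    have e3 : a + 1 + b + 1 = a + b + 2 := by omega
    rw [e1] at h2
    rw [e2, e3]
    have p1 := hpos (a + 1)
    have p2 := hpos (a + b + 1)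
    have p3 := hpos (b + 1)
    have p4 := hpos 1
    have p5 := hpos (a + b + 2)
    nlinarith [mul_pos p1 p2, mul_pos p4 p2, mul_pos p3 p1]
end helpers2

lemma exp_quad {u : ℝ} (h0 : 0 ≤ u) (h1 : u ≤ 1 / 2) :
    Real.exp u ≤ 1 + u + (13 / 18) * u ^ 2 := by
  have h := Real.exp_bound' h0 (by linarith) (n := 3) (by norm_num)
  have hsum : (∑ m ∈ Finset.range 3, u ^ m / m.factorial) = 1 + u + u ^ 2 / 2 := by
    norm_num [Finset.sum_range_succ, Nat.factorial]
  rw [hsum] at h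
  norm_num [Nat.factorial] at h
  nlinarith [h, sq_nonneg u]

lemma scalar_key {q : ℕ} (hq : 10 ≤ q) {ε s : ℝ} (hε : 0 < ε) (hε1 : ε ≤ 1 / 10)
    (hs : 0 ≤ s) (hsq : (q : ℝ) * s ≤ ε) :
    (1 / (1 - s)) ^ q ≤ 1 + q * s * (1 + ε) := by
  have hq' : (10 : ℝ) ≤ (q : ℝ) := by exact_mod_cast hq
  have hs100 : s ≤ 1 / 100 := by nlinarith
  have h1s : (0 : ℝ) < 1 - s := by linarith
  set x := s / (1 - s) with hxdef
  have hx0 : 0 ≤ x := div_nonneg hs h1s.le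
  have hxs : x * (1 - s) = s := by rw [hxdef]; field_simp
  have hcx : 1 / (1 - s) = 1 + x := by
    rw [eq_comm, eq_div_iff h1s.ne']; nlinarith [hxs]
  set u := (q : ℝ) * x with hudef
  have hu0 : 0 ≤ u := mul_nonneg (by positivity) hx0
  have hus : u * (1 - s) = (q : ℝ) * s := by rw [hudef]; nlinarith [hxs]
  have hqs0 : 0 ≤ (q : ℝ) * s := mul_nonneg (by positivity) hs
  have hub : u ≤ (100 / 99) * ((q : ℝ) * s) := by nlinarith
  have hube : u ≤ (100 / 99) * ε := by nlinarith
  have hu12 : u ≤ 1 / 2 := by nlinarith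
  have hpow : (1 + x) ^ q ≤ Real.exp x ^ q :=
    pow_le_pow_left₀ (by linarith) (by linarith [Real.add_one_le_exp x]) q
  have hexp : Real.exp x ^ q = Real.exp u := by
    rw [hudef, Real.exp_nat_mul]
  have hb := exp_quad hu0 hu12
  have h10s : 10 * s ≤ ε := by nlinarith
  have key : u + (13 / 18) * u ^ 2 ≤ (q : ℝ) * s * (1 + ε) := by
    have f1 : u * s ≤ (100 / 99) * ((q : ℝ) * s) * s :=
      mul_le_mul_of_nonneg_right hub hs
    have f2 : u * u ≤ ((100 / 99) * ((q : ℝ) * s)) * ((100 / 99) * ε) :=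
      mul_le_mul hub hube hu0 (by positivity)
    have f3 : ((q : ℝ) * s) * (10 * s) ≤ ((q : ℝ) * s) * ε :=
      mul_le_mul_of_nonneg_left h10s hqs0
    nlinarith [hus, sq_nonneg u]
  calc (1 / (1 - s)) ^ q = (1 + x) ^ q := by rw [hcx]
    _ ≤ Real.exp u := by rw [← hexp]; exact hpow
    _ ≤ 1 + u + (13 / 18) * u ^ 2 := hb
    _ ≤ 1 + q * s * (1 + ε) := by linarith

section helpers
variable {n : ℕ}

lemma vecMulVec_mulVec' (z v u : Fin n → ℝ) : vecMulVec z v *ᵥ u = (v ⬝ᵥ u) • z := by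
  funext i
  simp [vecMulVec_apply, mulVec, dotProduct, Finset.mul_sum, mul_comm, mul_left_comm]

lemma mul_vecMulVec' (M : Matrix (Fin n) (Fin n) ℝ) (u v : Fin n → ℝ) :
    M * vecMulVec u v = vecMulVec (M *ᵥ u) v := by
  ext i j
  simp [vecMulVec_apply, mul_apply, mulVec, dotProduct, Finset.sum_mul, mul_assoc]

lemma vecMulVec_mul' (M : Matrix (Fin n) (Fin n) ℝ) (u v : Fin n → ℝ) :
    vecMulVec u v * M = vecMulVec u (Mᵀ *ᵥ v) := by
  ext i j
  simp [vecMulVec_apply, mul_apply, mulVec, transpose_apply, dotProduct, Finset.mul_sum,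
    mul_comm, mul_left_comm]

lemma trace_vecMulVec_mul' (u v : Fin n → ℝ) (M : Matrix (Fin n) (Fin n) ℝ) :
    (vecMulVec u v * M).trace = v ⬝ᵥ M *ᵥ u := by
  simp only [trace, diag, mul_apply, vecMulVec_apply, dotProduct, mulVec]
  rw [Finset.sum_comm]
  congr 1; funext j
  simp [Finset.mul_sum, mul_comm, mul_left_comm]


lemma inv_pow_eq (A : Matrix (Fin n) (Fin n) ℝ) (h : IsUnit A.det) (k : ℕ) :
    (A ^ k)⁻¹ = A⁻¹ ^ k := by
  apply inv_eq_right_inv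
  have hc : Commute A A⁻¹ := by
    unfold Commute SemiconjBy
    rw [mul_nonsing_inv _ h, nonsing_inv_mul _ h]
  rw [← hc.mul_pow, mul_nonsing_inv _ h, one_pow]

end helpers

set_option maxHeartbeats 1000000 in
theorem trace_inv_pow_rank_one_downdate_le {n q : ℕ} (hq : 10 ≤ q)
    (ε : ℝ) (hε : 0 < ε) (hε1 : ε ≤ 1 / 10)
    (Z : Matrix (Fin n) (Fin n) ℝ) (hZ : Z.PosDef) (w : Fin n → ℝ)
    (hw : w ⬝ᵥ Z⁻¹.mulVec w ≤ ε / q) :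
    (Z - vecMulVec w w).PosDef ∧
      (((Z - vecMulVec w w) ^ q)⁻¹).trace ≤
        ((Z ^ q)⁻¹).trace + q * (1 + ε) * (w ⬝ᵥ ((Z ^ (q + 1))⁻¹).mulVec w) := by
  classical
  have hq' : (10 : ℝ) ≤ (q : ℝ) := by exact_mod_cast hq
  have hqpos : (0 : ℝ) < q := by linarith
  set X := Z⁻¹ with hXdef
  have hXpd : X.PosDef := hZ.inv
  have hZdet : IsUnit Z.det := isUnit_iff_ne_zero.mpr hZ.det_pos.ne'
  have hZsym : Zᵀ = Z := by
    have := hZ.1; rwa [IsHermitian, conjTranspose_eq_transpose_of_trivial] at this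
  have hXsym : Xᵀ = X := by
    have := hXpd.1; rwa [IsHermitian, conjTranspose_eq_transpose_of_trivial] at this
  set z := X *ᵥ w with hzdef
  set s := w ⬝ᵥ X *ᵥ w with hsdef
  have hsw : (q : ℝ) * s ≤ ε := by
    rw [le_div_iff₀ hqpos] at hw
    linarith [hw]
  have hs0 : 0 ≤ s := by
    have := hXpd.posSemidef.dotProduct_mulVec_nonneg w
    simpa [hsdef] using this
  have hs1 : s ≤ 1 / 100 := by nlinarith
  have h1s : (0 : ℝ) < 1 - s := by linarith
  -- A is positive definite
  have hZz : Z *ᵥ z = w := by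
    rw [hzdef, mulVec_mulVec, mul_nonsing_inv _ hZdet, one_mulVec]
  have hcs_wu : ∀ u : Fin n → ℝ, (w ⬝ᵥ u) ^ 2 ≤ s * (u ⬝ᵥ Z *ᵥ u) := by
    intro u
    have h := psd_cauchy_schwarz Z hZ.posSemidef z u
    have h1 : z ⬝ᵥ Z *ᵥ u = w ⬝ᵥ u := by
      rw [← sym_dot Z hZsym z u, hZz]
    have h2 : z ⬝ᵥ Z *ᵥ z = s := by
      rw [← sym_dot Z hZsym z z, hZz, hzdef, hsdef]
    rw [h1, h2] at h
    linarith [h]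
  have hWsym : (vecMulVec w w)ᵀ = vecMulVec w w := by
    ext i j; simp [vecMulVec_apply, transpose_apply, mul_comm]
  have hApd : (Z - vecMulVec w w).PosDef := by
    refine PosDef.of_dotProduct_mulVec_pos ?_ ?_
    · rw [IsHermitian, conjTranspose_eq_transpose_of_trivial, transpose_sub, hZsym, hWsym]
    · intro u hu
      have h1 : (0:ℝ) < u ⬝ᵥ Z *ᵥ u := by
        have := hZ.dotProduct_mulVec_pos hu; simpa using this
      have h2 := hcs_wu u
      have hrw : star u ⬝ᵥ (Z - vecMulVec w w) *ᵥ u = u ⬝ᵥ Z *ᵥ u - (w ⬝ᵥ u) ^ 2 := by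
        rw [star_trivial, sub_mulVec, dotProduct_sub, vecMulVec_mulVec']
        rw [dotProduct_smul, smul_eq_mul, dotProduct_comm u w]
        ring
      rw [hrw]
      nlinarith
  refine ⟨hApd, ?_⟩
  by_cases hw0 : w = 0
  · have hv0 : vecMulVec w w = 0 := by ext i j; simp [vecMulVec_apply, hw0]
    rw [hv0, sub_zero, hw0]
    simp
  -- main case
  have hspos : 0 < s := by
    have := hXpd.dotProduct_mulVec_pos hw0; simpa [hsdef] using this
  set c := 1 / (1 - s) with hcdef
  have hcpos : 0 < c := by positivity
  have hc1 : c * (1 - s) = 1 := by rw [hcdef]; field_simp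
  set A := Z - vecMulVec w w with hAdef
  have hAdet : IsUnit A.det := isUnit_iff_ne_zero.mpr hApd.det_pos.ne'
  have hwz : w ⬝ᵥ z = s := rfl
  set V := vecMulVec z z with hVdef
  set Y := X + c • V with hYdef
  -- Sherman-Morrison
  have hWX : vecMulVec w w * X = vecMulVec w z := by
    rw [vecMulVec_mul', hXsym, ← hzdef]
  have hZV : Z * V = vecMulVec w z := by
    rw [hVdef, mul_vecMulVec', hZz]
  have hVsym : Vᵀ = V := by
    rw [hVdef]; ext i j; simp [vecMulVec_apply, transpose_apply, mul_comm]
  have hWV : vecMulVec w w * V = s • vecMulVec w z := by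
    rw [vecMulVec_mul', hVsym, hVdef, vecMulVec_mulVec', dotProduct_comm z w, hwz]
    ext i j; simp [vecMulVec_apply, smul_eq_mul]; ring
  have hSM : A * Y = 1 := by
    rw [hAdef, hYdef, sub_mul, mul_add, mul_add, Matrix.mul_smul, Matrix.mul_smul, hZV, hWX,
      hWV, mul_nonsing_inv _ hZdet, smul_smul]
    have hc2 : c = 1 + c * s := by nlinarith [hc1]
    have h0 : c • vecMulVec w z = vecMulVec w z + (c * s) • vecMulVec w z := by
      calc c • vecMulVec w z = (1 + c * s) • vecMulVec w z := by rw [← hc2]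
        _ = vecMulVec w z + (c * s) • vecMulVec w z := by rw [add_smul, one_smul]
    rw [h0]
    abel
  have hY : A⁻¹ = Y := inv_eq_right_inv hSM
  -- the moment sequence
  set t : ℕ → ℝ := fun m => w ⬝ᵥ (X ^ m) *ᵥ w with htdef
  have htpos : ∀ m, 0 < t m := by
    intro m
    have := (posDef_pow hXpd m).dotProduct_mulVec_pos hw0
    simpa [htdef] using this
  have hXpsym : ∀ m : ℕ, (X ^ m)ᵀ = X ^ m := by
    intro m
    have := hXpd.1.pow m
    rwa [IsHermitian, conjTranspose_eq_transpose_of_trivial] at this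
  have hlc : ∀ m, t (m + 1) ^ 2 ≤ t m * t (m + 2) := by
    intro m
    have h := psd_cauchy_schwarz (X ^ m) (posDef_pow hXpd m).posSemidef w (X *ᵥ w)
    have e1 : (X ^ m) *ᵥ (X *ᵥ w) = (X ^ (m + 1)) *ᵥ w := by
      rw [mulVec_mulVec, ← pow_succ]
    have e2 : (X *ᵥ w) ⬝ᵥ (X ^ m) *ᵥ (X *ᵥ w) = t (m + 2) := by
      rw [e1, sym_dot X hXsym, mulVec_mulVec, ← pow_succ']
    have e3 : w ⬝ᵥ (X ^ m) *ᵥ (X *ᵥ w) = t (m + 1) := by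
      rw [e1]
    rw [e2, e3] at h
    exact h
  have hmerge := seq_merge t htpos hlc
  have htau : ∀ a, z ⬝ᵥ (X ^ a) *ᵥ z = t (a + 2) := by
    intro a
    rw [hzdef, mulVec_mulVec, ← pow_succ, sym_dot X hXsym, mulVec_mulVec, ← pow_succ']
  set x := c * s with hxdef
  have hxpos : 0 < x := mul_pos hcpos hspos
  have h1x : (0:ℝ) < 1 + x := by linarith
  -- key induction
  have dot_sandwich : ∀ P Q : Matrix (Fin n) (Fin n) ℝ,
      z ⬝ᵥ (P * V * Q) *ᵥ z = (z ⬝ᵥ P *ᵥ z) * (z ⬝ᵥ Q *ᵥ z) := by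
    intro P Q
    rw [← mulVec_mulVec, ← mulVec_mulVec, hVdef, vecMulVec_mulVec', mulVec_smul,
      dotProduct_smul, smul_eq_mul]
    ring
  have key : ∀ b a, z ⬝ᵥ (X ^ a * Y ^ b) *ᵥ z ≤ (1 + x) ^ b * t (a + b + 2) := by
    intro b
    induction b with
    | zero =>
      intro a
      simp [htau a]
    | succ b ih =>
      intro a
      have hexpand : X ^ a * Y ^ (b + 1) = X ^ (a + 1) * Y ^ b + c • (X ^ a * V * Y ^ b) := by
        calc X ^ a * Y ^ (b + 1) = X ^ a * (Y * Y ^ b) := by rw [pow_succ']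
          _ = X ^ a * ((X + c • V) * Y ^ b) := by
              have hmul : Y * Y ^ b = (X + c • V) * Y ^ b := by rw [hYdef]
              rw [hmul]
          _ = X ^ (a + 1) * Y ^ b + c • (X ^ a * V * Y ^ b) := by
              simp only [add_mul, mul_add, smul_mul_assoc, Matrix.mul_smul, pow_succ,
                mul_assoc]
      rw [hexpand, add_mulVec, dotProduct_add, smul_mulVec, dotProduct_smul, smul_eq_mul,
        dot_sandwich]
      have h1 := ih (a + 1)
      have h2 := ih 0
      rw [pow_zero, one_mul] at h2
      rw [zero_add] at h2
      have hm := hmerge (a + 1) (b + 1)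
      have hts : t 1 = s := by
        rw [htdef]; simp [pow_one, hsdef]
      rw [hts] at hm
      have e0 : a + 1 + b + 2 = a + b + 3 := by omega
      have e1 : a + 1 + (b + 1) + 1 = a + b + 3 := by omega
      have e2 : a + 1 + 1 = a + 2 := by omega
      have e3 : a + (b + 1) + 2 = a + b + 3 := by omega
      rw [e0] at h1
      rw [e1, e2] at hm
      rw [e3]
      have htb := htau b
      have hp2 : (0:ℝ) ≤ (1 + x) ^ b := by positivity
      have hA1 : z ⬝ᵥ (X ^ a) *ᵥ z * (z ⬝ᵥ (Y ^ b) *ᵥ z) ≤ t (a + 2) * ((1 + x) ^ b * t (b + 2)) := by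
        rw [htau a]
        exact mul_le_mul_of_nonneg_left h2 (htpos (a + 2)).le
      have hA2 : t (a + 2) * ((1 + x) ^ b * t (b + 2)) ≤ (1 + x) ^ b * (s * t (a + b + 3)) := by
        calc t (a + 2) * ((1 + x) ^ b * t (b + 2)) = (1 + x) ^ b * (t (a + 2) * t (b + 2)) := by
              ring
          _ ≤ (1 + x) ^ b * (s * t (a + b + 3)) := mul_le_mul_of_nonneg_left hm hp2
      have hA3 : c * (z ⬝ᵥ (X ^ a) *ᵥ z * (z ⬝ᵥ (Y ^ b) *ᵥ z)) ≤ c * ((1 + x) ^ b * (s * t (a + b + 3))) :=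
        mul_le_mul_of_nonneg_left (le_trans hA1 hA2) hcpos.le
      have hA4 : c * ((1 + x) ^ b * (s * t (a + b + 3))) = x * ((1 + x) ^ b * t (a + b + 3)) := by
        rw [hxdef]; ring
      have hA5 : (1 + x) ^ (b + 1) * t (a + b + 3)
          = (1 + x) ^ b * t (a + b + 3) + x * ((1 + x) ^ b * t (a + b + 3)) := by ring
      linarith
  -- trace induction
  have tr_key : ∀ m, m ≤ q → (Y ^ m * X ^ (q - m)).trace ≤
      (X ^ q).trace + (∑ b ∈ Finset.range m, (1 + x) ^ b) * (c * t (q + 1)) := by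
    intro m
    induction m with
    | zero => intro _; simp
    | succ m ih =>
      intro hm1
      have hm : m ≤ q := by omega
      have ihm := ih hm
      set j := q - m - 1 with hjdef
      have hj1 : q - m = j + 1 := by omega
      have hj2 : q - (m + 1) = j := by omega
      have hexpand : Y ^ (m + 1) * X ^ (q - (m + 1))
          = Y ^ m * X ^ (q - m) + c • (Y ^ m * (V * X ^ j)) := by
        rw [hj2, hj1, pow_succ]
        have hmul : Y ^ m * Y = Y ^ m * (X + c • V) := by rw [hYdef]
        rw [hmul]
        simp only [mul_add, add_mul, Matrix.mul_smul, smul_mul_assoc, mul_assoc, ← pow_succ']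
      rw [hexpand, trace_add, trace_smul, smul_eq_mul]
      have hmid : (Y ^ m * (V * X ^ j)).trace = z ⬝ᵥ (X ^ j * Y ^ m) *ᵥ z := by
        rw [trace_mul_comm, mul_assoc, hVdef, trace_vecMulVec_mul']
      rw [hmid]
      have hk := key m j
      have ej : j + m + 2 = q + 1 := by omega
      rw [ej] at hk
      have hck : c * (z ⬝ᵥ (X ^ j * Y ^ m) *ᵥ z) ≤ c * ((1 + x) ^ m * t (q + 1)) :=
        mul_le_mul_of_nonneg_left hk hcpos.le
      rw [Finset.sum_range_succ, add_mul]
      have : (1 + x) ^ m * (c * t (q + 1)) = c * ((1 + x) ^ m * t (q + 1)) := by ring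
      linarith [ihm, hck, this]
  have hfin := tr_key q le_rfl
  rw [Nat.sub_self, pow_zero, mul_one] at hfin
  -- geometric sum bound
  have hGeom : (∑ b ∈ Finset.range q, (1 + x) ^ b) * x = (1 + x) ^ q - 1 := by
    have := geom_sum_mul (1 + x) q
    rw [add_sub_cancel_left] at this
    exact this
  have hsk := scalar_key hq hε hε1 hs0 hsw
  have h1xc : 1 + x = 1 / (1 - s) := by
    rw [hxdef, hcdef]
    field_simp
    ring
  have hGeomC : (∑ b ∈ Finset.range q, (1 + x) ^ b) * c ≤ (q : ℝ) * (1 + ε) := by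
    have h1 : s * ((∑ b ∈ Finset.range q, (1 + x) ^ b) * c)
        = (∑ b ∈ Finset.range q, (1 + x) ^ b) * x := by
      rw [hxdef]; ring
    have h2 : (1 + x) ^ q - 1 ≤ (q : ℝ) * s * (1 + ε) := by
      rw [h1xc]; linarith [hsk]
    have h3 : s * ((∑ b ∈ Finset.range q, (1 + x) ^ b) * c) ≤ s * ((q : ℝ) * (1 + ε)) := by
      rw [h1, hGeom]; nlinarith [h2]
    exact le_of_mul_le_mul_left h3 hspos
  -- conclude
  have hconv1 : ((A ^ q)⁻¹).trace = (Y ^ q).trace := by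
    rw [inv_pow_eq A hAdet q, hY]
  have hconv2 : ((Z ^ q)⁻¹).trace = (X ^ q).trace := by
    rw [inv_pow_eq Z hZdet q, hXdef]
  have hconv3 : w ⬝ᵥ ((Z ^ (q + 1))⁻¹).mulVec w = t (q + 1) := by
    rw [inv_pow_eq Z hZdet (q + 1), htdef, hXdef]
  rw [hconv1, hconv2, hconv3]
  have hfinal : (∑ b ∈ Finset.range q, (1 + x) ^ b) * (c * t (q + 1))
      ≤ (q : ℝ) * (1 + ε) * t (q + 1) := by
    have := mul_le_mul_of_nonneg_right hGeomC (htpos (q + 1)).le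
    nlinarith [this]
  linarith [hfin, hfinal]
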